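/- If M ∈ SL₂(ℕ) is irreducible with L,U-factorization of length ℓ, then trace(M) ≥ ℓ + 1, with equality if and only if M is, up to cyclic permutation of the factors and exchanging L and U, equal to L·U^(ℓ−1). -/

import Mathlib

def L : Matrix (Fin 2) (Fin 2) ℕ := !![1,0;1,1]
def U : Matrix (Fin 2) (Fin 2) ℕ := !![1,1;0,1]

lemma L_ne_U : L ≠ U := by
  intro h
  have := congrFun (congrFun h 0) 1
  simp [L, U] at this

lemma L_pow (n : ℕ) : L ^ n = !![1,0;n,1] := by
  induction n with
  | zero => simp [Matrix.one_fin_two]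
  | succ k ih =>
      rw [pow_succ, ih, L, Matrix.mul_fin_two]
      norm_num

lemma U_pow (n : ℕ) : U ^ n = !![1,n;0,1] := by
  induction n with
  | zero => simp [Matrix.one_fin_two]
  | succ k ih =>
      rw [pow_succ, ih, U, Matrix.mul_fin_two]
      norm_num [Nat.add_comm]

lemma trace_rotate (w : List (Matrix (Fin 2) (Fin 2) ℕ)) (n : ℕ) :
    Matrix.trace (w.rotate n).prod = Matrix.trace w.prod := by
  rcases eq_or_ne w [] with rfl | hne
  · simp
  · rw [← List.rotate_mod,
      List.rotate_eq_drop_append_take (Nat.mod_lt _ (List.length_pos_iff.mpr hne)).le,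
      List.prod_append, Matrix.trace_mul_comm, ← List.prod_append,
      List.take_append_drop]

lemma entries_of_eq {p q r s p' q' r' s' : ℕ}
    (h : (!![p,q;r,s] : Matrix (Fin 2) (Fin 2) ℕ) = !![p',q';r',s']) :
    p = p' ∧ q = q' ∧ r = r' ∧ s = s' := by
  refine ⟨?_, ?_, ?_, ?_⟩
  · simpa using congrFun (congrFun h 0) 0
  · simpa using congrFun (congrFun h 0) 1
  · simpa using congrFun (congrFun h 1) 0
  · simpa using congrFun (congrFun h 1) 1

lemma key (v : List (Matrix (Fin 2) (Fin 2) ℕ)) (hv : ∀ A ∈ v, A = L ∨ A = U) :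
    ∃ p q r s : ℕ, v.prod = !![p,q;r,s] ∧ 1 ≤ p ∧ 1 ≤ s ∧
      v.length + 3 ≤ p + q + r + 2*s ∧
      (p + q + r + 2*s = v.length + 3 ↔
        (∀ A ∈ v, A = L) ∨ (∀ A ∈ v, A = U)) := by
  induction v with
  | nil =>
      refine ⟨1,0,0,1, by simp [Matrix.one_fin_two], le_refl _, le_refl _, by norm_num, ?_⟩
      simp
  | cons a t ih =>
      obtain ⟨p,q,r,s, hprod, hp, hs, hsum, hiff⟩ :=
        ih (fun A hA => hv A (List.mem_cons_of_mem _ hA))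
      have hLt : (∀ A ∈ t, A = L) → t.prod = !![1,0;t.length,1] := by
        intro h; rw [List.prod_eq_pow_card t L h, L_pow]
      have hUt : (∀ A ∈ t, A = U) → t.prod = !![1,t.length;0,1] := by
        intro h; rw [List.prod_eq_pow_card t U h, U_pow]
      rcases hv a (List.mem_cons_self) with rfl | rfl
      · -- a = L
        refine ⟨p, q, p+r, q+s, ?_, hp, le_trans hs (Nat.le_add_left _ _), ?_, ?_⟩
        · rw [List.prod_cons, hprod, L, Matrix.mul_fin_two]; norm_num
        · simp only [List.length_cons]; omega
        · simp only [List.length_cons]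
          constructor
          · intro h
            have h1 : p + q + r + 2*s = t.length + 3 ∧ p = 1 ∧ q = 0 := by omega
            rcases hiff.mp h1.1 with hall | hall
            · exact Or.inl (by
                intro A hA
                rcases List.mem_cons.mp hA with rfl | hA
                · rfl
                · exact hall A hA)
            · -- all U: then q = t.length = 0, so t = [] and all L
              have := (entries_of_eq (hprod.symm.trans (hUt hall))).2.1
              have ht0 : t.length = 0 := by omega
              have ht : t = [] := List.length_eq_zero_iff.mp ht0
              subst ht
              exact Or.inl (by intro A hA; simpa using hA)
          · intro h
            rcases h with hall | hall
            · have hallt : ∀ A ∈ t, A = L := fun A hA => hall A (List.mem_cons_of_mem _ hA)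
              have h1 := hiff.mpr (Or.inl hallt)
              have := entries_of_eq (hprod.symm.trans (hLt hallt))
              omega
            · exact absurd (hall L (List.mem_cons_self)) L_ne_U
      · -- a = U
        refine ⟨p+r, q+s, r, s, ?_, le_trans hp (Nat.le_add_right _ _), hs, ?_, ?_⟩
        · rw [List.prod_cons, hprod, U, Matrix.mul_fin_two]; norm_num
        · simp only [List.length_cons]; omega
        · simp only [List.length_cons]
          constructor
          · intro h
            have h1 : p + q + r + 2*s = t.length + 3 ∧ r = 0 ∧ s = 1 := by omega
            rcases hiff.mp h1.1 with hall | hall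
            · have := (entries_of_eq (hprod.symm.trans (hLt hall))).2.2.1
              have ht0 : t.length = 0 := by omega
              have ht : t = [] := List.length_eq_zero_iff.mp ht0
              subst ht
              exact Or.inr (by intro A hA; simpa using hA)
            · exact Or.inr (by
                intro A hA
                rcases List.mem_cons.mp hA with rfl | hA
                · rfl
                · exact hall A hA)
          · intro h
            rcases h with hall | hall
            · exact absurd (hall U (List.mem_cons_self)) (fun h' : U = L => L_ne_U h'.symm)
            · have hallt : ∀ A ∈ t, A = U := fun A hA => hall A (List.mem_cons_of_mem _ hA)
              have h1 := hiff.mpr (Or.inr hallt)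
              have := entries_of_eq (hprod.symm.trans (hUt hallt))
              omega

lemma rot_form (w : List (Matrix (Fin 2) (Fin 2) ℕ))
    (hw : ∀ A ∈ w, A = L ∨ A = U) (hL : L ∈ w) (hU : U ∈ w) :
    ∃ n v, w.rotate n = U :: (v ++ [L]) := by
  obtain ⟨x, y, hxy⟩ := List.append_of_mem hL
  subst hxy
  have hk : x.length + 1 ≤ (x ++ L :: y).length := by simp
  have h1 : (x ++ L :: y).rotate (x.length + 1) = (y ++ x) ++ [L] := by
    rw [List.rotate_eq_drop_append_take hk]
    have hxL : x ++ L :: y = (x ++ [L]) ++ y := by simp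
    rw [hxL, show x.length + 1 = (x ++ [L]).length by simp,
      List.drop_left, List.take_left]
    simp
  set w0 := x ++ L :: y with hw0
  set u := y ++ x with hu
  have hU1 : U ∈ u ++ [L] := by
    rw [← h1, List.mem_rotate]; exact hU
  have hlet1 : ∀ A ∈ u ++ [L], A = L ∨ A = U := by
    intro A hA
    apply hw
    rw [← List.mem_rotate (n := x.length + 1), h1]
    exact hA
  set A' := (u ++ [L]).takeWhile (· ≠ U) with hA'
  set D := (u ++ [L]).dropWhile (· ≠ U) with hD
  have hAD : A' ++ D = u ++ [L] := List.takeWhile_append_dropWhile ..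
  have hDne : D ≠ [] := by
    intro h
    rw [h, List.append_nil] at hAD
    have : U ∈ A' := hAD ▸ hU1
    have := List.mem_takeWhile_imp this
    simp at this
  have hDhead : D.head hDne = U := by
    have h0 := List.head_dropWhile_not (fun a => decide (a ≠ U)) (l := u ++ [L]) hDne
    simp only [decide_eq_false_iff_not] at h0
    exact not_ne_iff.mp h0
  have hDsplit : D = U :: D.tail := by
    conv_lhs => rw [← List.cons_head_tail hDne, hDhead]
  set B := D.tail with hB
  rw [hDsplit] at hAD
  rcases List.eq_nil_or_concat B with hB0 | ⟨B', c, hBc⟩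
  · rw [hB0] at hAD
    have := List.append_inj' hAD (by simp)
    have hUL : U = L := by
      have := this.2
      simpa using this
    exact absurd hUL.symm L_ne_U
  · rw [List.concat_eq_append] at hBc
    rw [hBc] at hAD
    have hAD2 : (A' ++ (U :: B')) ++ [c] = u ++ [L] := by
      rw [← hAD]; simp
    have hinj := List.append_inj' hAD2 (by simp)
    have hc : c = L := by have := hinj.2; simpa using this
    subst hc
    have huA : u = A' ++ U :: B' := hinj.1.symm
    have hAlen : A'.length ≤ (u ++ [L]).length := by
      rw [huA]; simp
    have h2 : (u ++ [L]).rotate A'.length = (U :: (B' ++ [L])) ++ A' := by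
      rw [List.rotate_eq_drop_append_take hAlen]
      have : u ++ [L] = A' ++ (U :: (B' ++ [L])) := by rw [huA]; simp
      rw [this, show A'.length = A'.length from rfl]
      rw [List.drop_left, List.take_left]
    have hAall : ∀ a ∈ A', a = L := by
      intro a ha
      have h3 : a ≠ U := by
        have := List.mem_takeWhile_imp ha
        simpa using this
      have h4 : a ∈ u ++ [L] := by
        rw [huA]
        exact List.mem_append_left _ (List.mem_append_left _ ha)
      rcases hlet1 a h4 with h | h
      · exact h
      · exact absurd h h3
    have hrot2 : w0.rotate (x.length + 1 + A'.length) = (U :: (B' ++ [L])) ++ A' := by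
      rw [← List.rotate_rotate, h1, h2]
    rcases List.eq_nil_or_concat A' with hA0 | ⟨A2, d, hA2⟩
    · refine ⟨x.length + 1 + A'.length, B', ?_⟩
      rw [hrot2, hA0]; simp
    · rw [List.concat_eq_append] at hA2
      have hd : d = L := hAall d (by rw [hA2]; simp)
      refine ⟨x.length + 1 + A'.length, B' ++ L :: A2, ?_⟩
      rw [hrot2, hA2, hd]
      simp

theorem stmt_18 (ℓ : ℕ) (w : List (Matrix (Fin 2) (Fin 2) ℕ))
    (hw : ∀ A ∈ w, A = L ∨ A = U) (hlen : w.length = ℓ)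
    (hirr : ∃ p, ∀ i j, 0 < (w.prod ^ p) i j) :
    ℓ + 1 ≤ Matrix.trace w.prod ∧
    (Matrix.trace w.prod = ℓ + 1 ↔
      ∃ n, w.rotate n = L :: List.replicate (ℓ - 1) U ∨
        (w.rotate n).map (fun A => if A = L then U else L) =
          L :: List.replicate (ℓ - 1) U) := by
  subst hlen
  obtain ⟨P, hP⟩ := hirr
  have hL : L ∈ w := by
    by_contra hLn
    have hall : ∀ A ∈ w, A = U := by
      intro A hA
      rcases hw A hA with rfl | rfl
      · exact absurd hA hLn
      · rfl
    have h1 : w.prod = U ^ w.length := List.prod_eq_pow_card w U hall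
    have h2 : (w.prod ^ P) 1 0 = 0 := by
      rw [h1, ← pow_mul, U_pow]
      simp
    have := hP 1 0
    omega
  have hU : U ∈ w := by
    by_contra hUn
    have hall : ∀ A ∈ w, A = L := by
      intro A hA
      rcases hw A hA with rfl | rfl
      · rfl
      · exact absurd hA hUn
    have h1 : w.prod = L ^ w.length := List.prod_eq_pow_card w L hall
    have h2 : (w.prod ^ P) 0 1 = 0 := by
      rw [h1, ← pow_mul, L_pow]
      simp
    have := hP 0 1
    omega
  obtain ⟨n0, v, hrot⟩ := rot_form w hw hL hU
  have hvlet : ∀ A ∈ v, A = L ∨ A = U := by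
    intro A hA
    apply hw
    rw [← List.mem_rotate (n := n0), hrot]
    simp [hA]
  obtain ⟨p,q,r,s, hprod, hp1, hs1, hsum, hiff⟩ := key v hvlet
  have hlen2 : w.length = v.length + 2 := by
    have := congrArg List.length hrot
    simp at this
    omega
  have htr : Matrix.trace w.prod = p + q + r + 2*s := by
    rw [← trace_rotate w n0, hrot]
    rw [List.prod_cons, List.prod_append, hprod]
    simp only [List.prod_cons, List.prod_nil, mul_one]
    rw [L, U, Matrix.mul_fin_two, Matrix.mul_fin_two, Matrix.trace_fin_two_of]
    ring
  constructor
  · omega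
  · constructor
    · intro h
      have heq : p + q + r + 2*s = v.length + 3 := by omega
      rcases hiff.mp heq with hall | hall
      · -- v all L : rotated word is U :: L^(len-1), use swap
        have hvrep : v = List.replicate v.length L := List.eq_replicate_length.mpr hall
        refine ⟨n0, Or.inr ?_⟩
        rw [hrot]
        have : v ++ [L] = List.replicate (v.length + 1) L := by
          rw [hvrep, ← List.replicate_succ' ]
          simp
        rw [this]
        rw [List.map_cons, List.map_replicate,
          show (if U = L then U else L) = L from if_neg (fun h' : U = L => L_ne_U h'.symm),
          show (if L = L then U else L) = U from if_pos rfl,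
          show w.length - 1 = v.length + 1 from by omega]
      · -- v all U : rotated word is U^(len-1) ++ [L], rotate further
        have hvrep : v = List.replicate v.length U := List.eq_replicate_length.mpr hall
        refine ⟨n0 + (v.length + 1), Or.inl ?_⟩
        rw [← List.rotate_rotate, hrot]
        have hshape : U :: (v ++ [L]) = List.replicate (v.length + 1) U ++ [L] := by
          rw [hvrep, List.replicate_succ]
          simp
        rw [hshape]
        rw [List.rotate_eq_drop_append_take (by simp)]
        rw [List.drop_left' (by simp), List.take_left' (by simp)]
        have : w.length - 1 = v.length + 1 := by omega
        rw [this]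
        simp
    · rintro ⟨n, hcase | hcase⟩
      · have : Matrix.trace w.prod = Matrix.trace (w.rotate n).prod := (trace_rotate w n).symm
        rw [hcase] at this
        rw [List.prod_cons, List.prod_replicate, U_pow] at this
        rw [this, L, Matrix.mul_fin_two, Matrix.trace_fin_two_of]
        omega
      · have hxlet : ∀ A ∈ w.rotate n, A = L ∨ A = U := by
          intro A hA
          exact hw A (List.mem_rotate.mp hA)
        have hinv : w.rotate n =
            ((w.rotate n).map (fun A => if A = L then U else L)).map
              (fun A => if A = L then U else L) := by
          rw [List.map_map]
          symm
          rw [show w.rotate n = (w.rotate n).map id by simp]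
          rw [List.map_map]
          apply List.map_congr_left
          intro a ha
          rcases hxlet a (by simpa using ha) with rfl | rfl
          · simp [if_pos rfl, if_neg (fun h' : U = L => L_ne_U h'.symm)]
          · simp [if_neg (fun h' : U = L => L_ne_U h'.symm), if_pos rfl]
        rw [hcase] at hinv
        rw [List.map_cons, List.map_replicate,
          show (if L = L then U else L) = U from if_pos rfl,
          show (if U = L then U else L) = L from if_neg (fun h' : U = L => L_ne_U h'.symm)] at hinv
        have : Matrix.trace w.prod = Matrix.trace (w.rotate n).prod := (trace_rotate w n).symm
        rw [hinv] at this
        rw [List.prod_cons, List.prod_replicate, L_pow] at this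
        rw [this, U, Matrix.mul_fin_two, Matrix.trace_fin_two_of]
        omega
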